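/- For samples of size d from volume-rescaled sampling with responses, the least squares estimator is unbiased: if (x_1,y_1),...,(x_d,y_d) are drawn so that the x's follow VS^d_{D_X} and each y_i ~ D_{Y|x=x_i}, then E[w*(S)] = Sigma^{-1} E_D[x y], where w*(S) solves the d x d linear system X w = y (using Cramer's rule). -/

import Mathlib

open MeasureTheory Matrix

lemma aux_sq_inverse (a : ℝ) : a ^ 2 * Ring.inverse a = a := by
  rcases eq_or_ne a 0 with h | h
  · simp [h]
  · rw [Ring.inverse_eq_inv']; field_simp

lemma perm_double_sum {d : ℕ} (M : Matrix (Fin d) (Fin d) ℝ) :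
    ∑ σ : Equiv.Perm (Fin d), ∑ τ : Equiv.Perm (Fin d),
      ((Equiv.Perm.sign σ : ℤ) : ℝ) * ((Equiv.Perm.sign τ : ℤ) : ℝ) * ∏ i, M (σ i) (τ i)
    = (d.factorial : ℝ) * M.det := by
  have hDet : M.det = ∑ ρ : Equiv.Perm (Fin d),
      ((Equiv.Perm.sign ρ : ℤ) : ℝ) * ∏ j, M j (ρ j) := by
    rw [← Matrix.det_transpose, Matrix.det_apply']
    simp [Matrix.transpose_apply]
  have key : ∀ σ : Equiv.Perm (Fin d),
      ∑ τ : Equiv.Perm (Fin d),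
        ((Equiv.Perm.sign σ : ℤ) : ℝ) * ((Equiv.Perm.sign τ : ℤ) : ℝ) * ∏ i, M (σ i) (τ i)
      = M.det := by
    intro σ
    rw [← Equiv.sum_comp (Equiv.mulRight σ)
      (fun τ => ((Equiv.Perm.sign σ : ℤ) : ℝ) * ((Equiv.Perm.sign τ : ℤ) : ℝ) * ∏ i, M (σ i) (τ i)),
      hDet]
    refine Finset.sum_congr rfl fun ρ _ => ?_
    have hsign : ((Equiv.Perm.sign σ : ℤ) : ℝ) * ((Equiv.Perm.sign (ρ * σ) : ℤ) : ℝ)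
        = ((Equiv.Perm.sign ρ : ℤ) : ℝ) := by
      rw [Equiv.Perm.sign_mul]
      rcases Int.units_eq_one_or (Equiv.Perm.sign σ) with h | h <;> simp [h]
    have hprod : ∏ i, M (σ i) ((ρ * σ) i) = ∏ j, M j (ρ j) := by
      simpa using Equiv.prod_comp σ (fun j => M j (ρ j))
    simp only [Equiv.coe_mulRight]
    rw [hprod, hsign]
  rw [Finset.sum_congr rfl fun σ _ => key σ, Finset.sum_const, Finset.card_univ,
    Fintype.card_perm, Fintype.card_fin, nsmul_eq_mul]

lemma aux_xy_integrable {d : ℕ} (D : Measure ((Fin d → ℝ) × ℝ))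
    (hx2 : ∀ i j : Fin d, Integrable (fun p => p.1 i * p.1 j) D)
    (hy2 : Integrable (fun p => p.2 ^ 2) D) (a : Fin d) :
    Integrable (fun p : (Fin d → ℝ) × ℝ => p.1 a * p.2) D := by
  refine ((hx2 a a).add hy2).mono ?_ ?_
  · exact (((continuous_apply a).comp continuous_fst).mul continuous_snd).aestronglyMeasurable
  · filter_upwards with p
    simp only [Pi.add_apply]
    rw [Real.norm_eq_abs, Real.norm_eq_abs,
      abs_of_nonneg (by nlinarith [sq_nonneg (p.1 a), sq_nonneg p.2] :
        (0:ℝ) ≤ p.1 a * p.1 a + p.2 ^ 2),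
      abs_le]
    constructor <;> nlinarith [sq_nonneg (p.1 a - p.2), sq_nonneg (p.1 a + p.2)]

lemma aux_det_pos {d : ℕ} (D : Measure ((Fin d → ℝ) × ℝ)) [IsProbabilityMeasure D]
    (hx2 : ∀ i j : Fin d, Integrable (fun p => p.1 i * p.1 j) D)
    (Sg : Matrix (Fin d) (Fin d) ℝ)
    (hSg : Sg = Matrix.of fun i j => ∫ p, p.1 i * p.1 j ∂D)
    (hinv : IsUnit Sg.det) : 0 < Sg.det := by
  have hpsd : Sg.PosSemidef := by
    rw [Matrix.posSemidef_iff_dotProduct_mulVec]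
    constructor
    · rw [Matrix.IsHermitian, hSg]
      ext i j
      simp [Matrix.conjTranspose_apply, mul_comm]
    · intro v
      have hrw : ∀ p : (Fin d → ℝ) × ℝ,
          (∑ i, v i * p.1 i) ^ 2 = ∑ i, ∑ j, v i * v j * (p.1 i * p.1 j) := by
        intro p
        rw [sq, Finset.sum_mul_sum]
        exact Finset.sum_congr rfl fun i _ => Finset.sum_congr rfl fun j _ => by ring
      have h2 : ∫ p, (∑ i, v i * p.1 i) ^ 2 ∂D = ∑ i, ∑ j, v i * v j * Sg i j := by
        simp_rw [hrw]
        rw [integral_finset_sum _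
          (fun i _ => integrable_finset_sum _ (fun j _ => (hx2 i j).const_mul _))]
        refine Finset.sum_congr rfl fun i _ => ?_
        rw [integral_finset_sum _ (fun j _ => (hx2 i j).const_mul _)]
        refine Finset.sum_congr rfl fun j _ => ?_
        rw [integral_const_mul, hSg]
        rfl
      have h1 : dotProduct (star v) (Sg *ᵥ v) = ∑ i, ∑ j, v i * v j * Sg i j := by
        simp only [dotProduct, Matrix.mulVec, star_trivial, Finset.mul_sum]
        exact Finset.sum_congr rfl fun i _ => Finset.sum_congr rfl fun j _ => by ring
      rw [h1, ← h2]
      exact integral_nonneg fun p => sq_nonneg _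
  have hdet : Sg.det = ∏ i, hpsd.1.eigenvalues i := by
    simpa using hpsd.1.det_eq_prod_eigenvalues
  have hnn : 0 ≤ Sg.det := by
    rw [hdet]; exact Finset.prod_nonneg fun i _ => hpsd.eigenvalues_nonneg i
  exact lt_of_le_of_ne hnn (Ne.symm (by simpa using hinv.ne_zero))

/-- the per-coordinate integrand -/
def auxq (d : ℕ) (k a c : Fin d) (p : (Fin d → ℝ) × ℝ) : ℝ :=
  p.1 a * (if c = k then p.2 else p.1 c)

lemma auxq_integrable {d : ℕ} (D : Measure ((Fin d → ℝ) × ℝ))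
    (hx2 : ∀ i j : Fin d, Integrable (fun p => p.1 i * p.1 j) D)
    (hy2 : Integrable (fun p => p.2 ^ 2) D) (k a c : Fin d) :
    Integrable (auxq d k a c) D := by
  unfold auxq
  by_cases hc : c = k
  · simpa [hc] using aux_xy_integrable D hx2 hy2 a
  · simpa [hc] using hx2 a c

lemma auxq_integral {d : ℕ} (D : Measure ((Fin d → ℝ) × ℝ))
    (Sg : Matrix (Fin d) (Fin d) ℝ)
    (hSg : Sg = Matrix.of fun i j => ∫ p, p.1 i * p.1 j ∂D) (k a c : Fin d) :
    ∫ p, auxq d k a c p ∂D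
      = (Sg.updateCol k (fun i => ∫ p, p.1 i * p.2 ∂D)) a c := by
  unfold auxq
  by_cases hc : c = k
  · simp [hc, Matrix.updateCol_apply]
  · simp [hc, Matrix.updateCol_apply, hSg]

lemma aux_expand {d : ℕ} (k : Fin d) (S : Fin d → (Fin d → ℝ) × ℝ) :
    (Matrix.of fun i => (S i).1).det *
      ((Matrix.of fun i => (S i).1).updateCol k fun i => (S i).2).det
    = ∑ σ : Equiv.Perm (Fin d), ∑ τ : Equiv.Perm (Fin d),
        ((Equiv.Perm.sign σ : ℤ) : ℝ) * ((Equiv.Perm.sign τ : ℤ) : ℝ) *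
          ∏ i, auxq d k (σ i) (τ i) (S i) := by
  have e1 : (Matrix.of fun i => (S i).1).det
      = ∑ σ : Equiv.Perm (Fin d), ((Equiv.Perm.sign σ : ℤ) : ℝ) * ∏ i, (S i).1 (σ i) := by
    rw [← Matrix.det_transpose, Matrix.det_apply']
    simp [Matrix.transpose_apply]
  have e2 : ((Matrix.of fun i => (S i).1).updateCol k fun i => (S i).2).det
      = ∑ τ : Equiv.Perm (Fin d), ((Equiv.Perm.sign τ : ℤ) : ℝ) *
          ∏ i, (if τ i = k then (S i).2 else (S i).1 (τ i)) := by
    rw [← Matrix.det_transpose, Matrix.det_apply']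
    simp [Matrix.transpose_apply, Matrix.updateCol_apply]
  rw [e1, e2, Finset.sum_mul_sum]
  refine Finset.sum_congr rfl fun σ _ => Finset.sum_congr rfl fun τ _ => ?_
  rw [mul_mul_mul_comm, ← Finset.prod_mul_distrib]
  rfl

lemma aux_key_int {d : ℕ} (D : Measure ((Fin d → ℝ) × ℝ)) [IsProbabilityMeasure D]
    (hx2 : ∀ i j : Fin d, Integrable (fun p => p.1 i * p.1 j) D)
    (hy2 : Integrable (fun p => p.2 ^ 2) D) (k : Fin d) :
    Integrable (fun S : Fin d → (Fin d → ℝ) × ℝ =>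
      (Matrix.of fun i => (S i).1).det *
        ((Matrix.of fun i => (S i).1).updateCol k fun i => (S i).2).det)
      (Measure.pi fun _ : Fin d => D) := by
  letI : MeasureSpace ((Fin d → ℝ) × ℝ) := ⟨D⟩
  haveI : SigmaFinite (volume : Measure ((Fin d → ℝ) × ℝ)) :=
    inferInstanceAs (SigmaFinite D)
  simp_rw [aux_expand]
  refine integrable_finset_sum _ fun σ _ => integrable_finset_sum _ fun τ _ => ?_
  exact (Integrable.fintype_prod (f := fun i => auxq d k (σ i) (τ i))
    (fun i => auxq_integrable D hx2 hy2 k (σ i) (τ i))).const_mul _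

lemma aux_key {d : ℕ} (D : Measure ((Fin d → ℝ) × ℝ)) [IsProbabilityMeasure D]
    (hx2 : ∀ i j : Fin d, Integrable (fun p => p.1 i * p.1 j) D)
    (hy2 : Integrable (fun p => p.2 ^ 2) D)
    (Sg : Matrix (Fin d) (Fin d) ℝ)
    (hSg : Sg = Matrix.of fun i j => ∫ p, p.1 i * p.1 j ∂D) (k : Fin d) :
    ∫ S : Fin d → (Fin d → ℝ) × ℝ,
      (Matrix.of fun i => (S i).1).det *
        ((Matrix.of fun i => (S i).1).updateCol k fun i => (S i).2).det
      ∂(Measure.pi fun _ : Fin d => D)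
    = (d.factorial : ℝ) *
        (Sg.updateCol k (fun i => ∫ p, p.1 i * p.2 ∂D)).det := by
  letI : MeasureSpace ((Fin d → ℝ) × ℝ) := ⟨D⟩
  haveI : SigmaFinite (volume : Measure ((Fin d → ℝ) × ℝ)) :=
    inferInstanceAs (SigmaFinite D)
  simp_rw [aux_expand]
  rw [integral_finset_sum _ (fun σ _ => integrable_finset_sum _ fun τ _ =>
    (Integrable.fintype_prod (f := fun i => auxq d k (σ i) (τ i))
      (fun i => auxq_integrable D hx2 hy2 k (σ i) (τ i))).const_mul _)]
  rw [← perm_double_sum (Sg.updateCol k (fun i => ∫ p, p.1 i * p.2 ∂D))]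
  refine Finset.sum_congr rfl fun σ _ => ?_
  rw [integral_finset_sum _ (fun τ _ =>
    (Integrable.fintype_prod (f := fun i => auxq d k (σ i) (τ i))
      (fun i => auxq_integrable D hx2 hy2 k (σ i) (τ i))).const_mul _)]
  refine Finset.sum_congr rfl fun τ _ => ?_
  rw [integral_const_mul]
  congr 1
  have hfub : (∫ S : Fin d → (Fin d → ℝ) × ℝ, ∏ i, auxq d k (σ i) (τ i) (S i)
      ∂(Measure.pi fun _ : Fin d => D)) = ∏ i, ∫ p, auxq d k (σ i) (τ i) p ∂D :=
    MeasureTheory.integral_fintype_prod_eq_prod (ι := Fin d) (fun i => auxq d k (σ i) (τ i))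
  rw [hfub]
  exact Finset.prod_congr rfl fun i _ => auxq_integral D Sg hSg k (σ i) (τ i)

/-- The least squares estimator of a size-`d` volume-rescaled sample
(with responses drawn conditionally) is unbiased. -/
theorem stmt9 (d : ℕ) (hd : 0 < d)
    (D : Measure ((Fin d → ℝ) × ℝ)) [IsProbabilityMeasure D]
    (hx2 : ∀ i j : Fin d, Integrable (fun p => p.1 i * p.1 j) D)
    (hy2 : Integrable (fun p => p.2 ^ 2) D)
    (Sg : Matrix (Fin d) (Fin d) ℝ)
    (hSg : Sg = Matrix.of fun i j => ∫ p, p.1 i * p.1 j ∂D)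
    (hinv : IsUnit Sg.det) :
    (∫ S : Fin d → (Fin d → ℝ) × ℝ,
        (Matrix.of fun i => (S i).1)⁻¹ *ᵥ (fun i => (S i).2)
        ∂((Measure.pi fun _ : Fin d => D).withDensity fun S =>
          ENNReal.ofReal ((Matrix.of fun i => (S i).1).det ^ 2 /
            ((Nat.factorial d : ℝ) * Sg.det))))
    = Sg⁻¹ *ᵥ (fun i => ∫ p, p.1 i * p.2 ∂D) := by
  have hdetpos : 0 < Sg.det := aux_det_pos D hx2 Sg hSg hinv
  have hfac : (0:ℝ) < (d.factorial : ℝ) := by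
    exact_mod_cast Nat.factorial_pos d
  -- measurability of the density
  have hmeasdet : Measurable fun S : Fin d → (Fin d → ℝ) × ℝ =>
      (Matrix.of fun i => (S i).1).det := by
    have : (fun S : Fin d → (Fin d → ℝ) × ℝ => (Matrix.of fun i => (S i).1).det)
        = fun S => ∑ σ : Equiv.Perm (Fin d),
            ((Equiv.Perm.sign σ : ℤ) : ℝ) * ∏ i, (S (σ i)).1 i := by
      funext S
      rw [Matrix.det_apply']
      rfl
    rw [this]
    refine Finset.measurable_sum _ fun σ _ => Measurable.const_mul ?_ _
    exact Finset.measurable_prod _ fun i _ =>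
      (measurable_pi_apply i).comp (measurable_pi_apply (σ i)).fst
  have hmeasw : Measurable fun S : Fin d → (Fin d → ℝ) × ℝ =>
      (((Matrix.of fun i => (S i).1).det ^ 2 /
        ((Nat.factorial d : ℝ) * Sg.det)).toNNReal) :=
    ((hmeasdet.pow_const 2).div_const _).real_toNNReal
  rw [show (fun S : Fin d → (Fin d → ℝ) × ℝ =>
        ENNReal.ofReal ((Matrix.of fun i => (S i).1).det ^ 2 /
          ((Nat.factorial d : ℝ) * Sg.det)))
      = fun S => ((((Matrix.of fun i => (S i).1).det ^ 2 /
          ((Nat.factorial d : ℝ) * Sg.det)).toNNReal : NNReal) : ENNReal) from rfl,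
    integral_withDensity_eq_integral_smul hmeasw]
  have hpt : ∀ S : Fin d → (Fin d → ℝ) × ℝ,
      (((Matrix.of fun i => (S i).1).det ^ 2 /
          ((Nat.factorial d : ℝ) * Sg.det)).toNNReal : NNReal) •
        ((Matrix.of fun i => (S i).1)⁻¹ *ᵥ fun i => (S i).2)
      = (((Nat.factorial d : ℝ) * Sg.det)⁻¹) •
          ((Matrix.of fun i => (S i).1).det •
            Matrix.cramer (Matrix.of fun i => (S i).1) (fun i => (S i).2)) := by
    intro S
    rw [NNReal.smul_def, Real.coe_toNNReal _ (by positivity)]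
    rw [Matrix.inv_def, Matrix.smul_mulVec, ← Matrix.cramer_eq_adjugate_mulVec]
    rw [smul_smul, smul_smul]
    congr 1
    rw [div_eq_mul_inv]
    calc (Matrix.of fun i => (S i).1).det ^ 2 * ((Nat.factorial d : ℝ) * Sg.det)⁻¹ *
          Ring.inverse (Matrix.of fun i => (S i).1).det
        = ((Nat.factorial d : ℝ) * Sg.det)⁻¹ *
            ((Matrix.of fun i => (S i).1).det ^ 2 *
              Ring.inverse (Matrix.of fun i => (S i).1).det) := by ring
      _ = ((Nat.factorial d : ℝ) * Sg.det)⁻¹ * (Matrix.of fun i => (S i).1).det := by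
          rw [aux_sq_inverse]
  simp_rw [hpt]
  rw [integral_smul]
  have hcram : (fun S : Fin d → (Fin d → ℝ) × ℝ =>
        (Matrix.of fun i => (S i).1).det •
          Matrix.cramer (Matrix.of fun i => (S i).1) (fun i => (S i).2))
      = fun S => ∑ k : Fin d,
          ((Matrix.of fun i => (S i).1).det *
            ((Matrix.of fun i => (S i).1).updateCol k fun i => (S i).2).det) •
            (Pi.single k 1 : Fin d → ℝ) := by
    funext S
    ext j
    simp [Matrix.cramer_apply, Pi.single_apply, Finset.sum_ite_eq', smul_eq_mul]
  rw [hcram,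
    integral_finset_sum _ (fun k _ => (aux_key_int D hx2 hy2 k).smul_const _)]
  have hsum : ∀ k ∈ Finset.univ, (∫ S : Fin d → (Fin d → ℝ) × ℝ,
      ((Matrix.of fun i => (S i).1).det *
        ((Matrix.of fun i => (S i).1).updateCol k fun i => (S i).2).det) •
        (Pi.single k 1 : Fin d → ℝ) ∂(Measure.pi fun _ : Fin d => D))
      = ((d.factorial : ℝ) *
          (Sg.updateCol k (fun i => ∫ p, p.1 i * p.2 ∂D)).det) •
          (Pi.single k 1 : Fin d → ℝ) := by
    intro k _
    rw [integral_smul_const, aux_key D hx2 hy2 Sg hSg k]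
  rw [Finset.sum_congr rfl hsum]
  funext k
  have hrhs : (Sg⁻¹ *ᵥ fun i => ∫ p, p.1 i * p.2 ∂D) k
      = Ring.inverse Sg.det *
          (Sg.updateCol k (fun i => ∫ p, p.1 i * p.2 ∂D)).det := by
    rw [Matrix.inv_def, Matrix.smul_mulVec, ← Matrix.cramer_eq_adjugate_mulVec]
    simp [Matrix.cramer_apply]
  rw [hrhs, Ring.inverse_eq_inv']
  simp only [Pi.smul_apply, Finset.sum_apply, Pi.single_apply, smul_eq_mul]
  rw [Finset.sum_congr rfl (fun j _ => by rw [mul_ite, mul_one, mul_zero]),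
    Finset.sum_ite_eq]
  simp only [Finset.mem_univ, if_true]
  field_simp
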